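/- Let U_1, …, U_M be unitary operators on ℂ^d and let e_0, …, e_M be the standard orthonormal basis of the clock register ℂ^{M+1}. Define the propagation Hamiltonian H_prop = Σ_{t=1}^{M} H_t on ℂ^d ⊗ ℂ^{M+1}, where H_t = −(1/2) U_t ⊗ |e_t⟩⟨e_{t−1}| − (1/2) U_t^† ⊗ |e_{t−1}⟩⟨e_t| + (1/2) I ⊗ (|e_t⟩⟨e_t| + |e_{t−1}⟩⟨e_{t−1}|). Then: (i) H_prop is positive semidefinite, and (ii) the kernel of H_prop is exactly the set of history states, i.e., ker(H_prop) = { (M+1)^{-1/2} Σ_{t=0}^{M} (U_t ⋯ U_1 φ) ⊗ e_t : φ ∈ ℂ^d } (with the t = 0 term being φ ⊗ e_0). -/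

import Mathlib

open scoped Kronecker ComplexOrder

/-- `gateProd U t = U_t * U_{t-1} * ⋯ * U_1` (0-indexed gates; out-of-range gates act as `1`). -/
noncomputable def gateProd {d M : ℕ} (U : Fin M → Matrix (Fin d) (Fin d) ℂ) :
    ℕ → Matrix (Fin d) (Fin d) ℂ
  | 0 => 1
  | t + 1 => (if h : t < M then U ⟨t, h⟩ else 1) * gateProd U t

/-- The Feynman–Kitaev propagation Hamiltonian
`H_prop = ∑_{t=1}^{M} (−(1/2) U_t ⊗ |e_t⟩⟨e_{t−1}| − (1/2) U_t† ⊗ |e_{t−1}⟩⟨e_t|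
+ (1/2) I ⊗ (|e_t⟩⟨e_t| + |e_{t−1}⟩⟨e_{t−1}|))` on `ℂ^d ⊗ ℂ^{M+1}`. -/
noncomputable def Hprop {d M : ℕ} (U : Fin M → Matrix (Fin d) (Fin d) ℂ) :
    Matrix (Fin d × Fin (M + 1)) (Fin d × Fin (M + 1)) ℂ :=
  ∑ t : Fin M,
    ((-(1 / 2 : ℂ)) • (U t ⊗ₖ Matrix.single t.succ t.castSucc (1 : ℂ))
      + (-(1 / 2 : ℂ)) •
          ((U t).conjTranspose ⊗ₖ Matrix.single t.castSucc t.succ (1 : ℂ))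
      + (1 / 2 : ℂ) • ((1 : Matrix (Fin d) (Fin d) ℂ) ⊗ₖ
          (Matrix.single t.succ t.succ (1 : ℂ)
            + Matrix.single t.castSucc t.castSucc (1 : ℂ))))

open Matrix

variable {d M : ℕ}

lemma kron_conjT (A : Matrix (Fin d) (Fin d) ℂ) (B : Matrix (Fin (M+1)) (Fin (M+1)) ℂ) :
    (A ⊗ₖ B)ᴴ = Aᴴ ⊗ₖ Bᴴ := by
  ext ⟨i,q⟩ ⟨j,p⟩
  simp [Matrix.conjTranspose_apply, Matrix.kroneckerMap_apply, mul_comm]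

lemma std_conjT (s r : Fin (M+1)) :
    (Matrix.single s r (1:ℂ))ᴴ = Matrix.single r s 1 := by
  ext a b
  simp [Matrix.conjTranspose_apply, Matrix.single, apply_ite (starRingEnd ℂ), and_comm]

/-- slice of the composite vector at clock time t -/
def sl (v : Fin d × Fin (M+1) → ℂ) (t : Fin (M+1)) : Fin d → ℂ := fun i => v (i, t)

lemma kron_std_mulVec (A : Matrix (Fin d) (Fin d) ℂ) (s r : Fin (M+1))
    (v : Fin d × Fin (M+1) → ℂ) (i : Fin d) (q : Fin (M+1)) :
    (A ⊗ₖ Matrix.single s r (1:ℂ)).mulVec v (i, q)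
      = if q = s then A.mulVec (sl v r) i else 0 := by
  unfold Matrix.mulVec dotProduct sl
  rw [Fintype.sum_prod_type]
  simp only [Matrix.kroneckerMap_apply, Matrix.single, Matrix.of_apply, mul_ite, ite_mul,
    mul_one, mul_zero, zero_mul, ite_and]
  by_cases h : q = s
  · subst h
    simp [Finset.sum_ite_eq]
  · simp [h, show ¬ s = q from fun hs => h hs.symm]

lemma kron_std_qform (A : Matrix (Fin d) (Fin d) ℂ) (s r : Fin (M+1))
    (v : Fin d × Fin (M+1) → ℂ) :
    star v ⬝ᵥ (A ⊗ₖ Matrix.single s r (1:ℂ)).mulVec v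
      = star (sl v s) ⬝ᵥ A.mulVec (sl v r) := by
  simp only [dotProduct, Fintype.sum_prod_type_right, kron_std_mulVec, Pi.star_apply,
    mul_ite, mul_zero]
  rw [Finset.sum_comm]
  simp [Finset.sum_ite_eq', sl]

noncomputable def Hterm (U : Fin M → Matrix (Fin d) (Fin d) ℂ) (t : Fin M) :
    Matrix (Fin d × Fin (M + 1)) (Fin d × Fin (M + 1)) ℂ :=
  (-(1 / 2 : ℂ)) • (U t ⊗ₖ Matrix.single t.succ t.castSucc (1 : ℂ))
    + (-(1 / 2 : ℂ)) •
        ((U t).conjTranspose ⊗ₖ Matrix.single t.castSucc t.succ (1 : ℂ))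
    + (1 / 2 : ℂ) • ((1 : Matrix (Fin d) (Fin d) ℂ) ⊗ₖ
        (Matrix.single t.succ t.succ (1 : ℂ)
          + Matrix.single t.castSucc t.castSucc (1 : ℂ)))

lemma Hprop_eq (U : Fin M → Matrix (Fin d) (Fin d) ℂ) : Hprop U = ∑ t, Hterm U t := rfl

lemma succ_ne_castSucc (t : Fin M) : (t.succ : Fin (M+1)) ≠ t.castSucc := by
  simp [Fin.ext_iff]

lemma Hterm_isHermitian (U : Fin M → Matrix (Fin d) (Fin d) ℂ) (t : Fin M) :
    (Hterm U t).IsHermitian := by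
  unfold Matrix.IsHermitian Hterm
  simp only [Matrix.conjTranspose_add, Matrix.conjTranspose_smul, kron_conjT, std_conjT,
    Matrix.conjTranspose_conjTranspose, Matrix.conjTranspose_one]
  rw [show star (-(1/2) : ℂ) = -(1/2) by norm_num,
    show star ((1/2) : ℂ) = 1/2 by norm_num]
  abel

lemma Hterm_mulVec (U : Fin M → Matrix (Fin d) (Fin d) ℂ) (t : Fin M)
    (v : Fin d × Fin (M+1) → ℂ) (i : Fin d) (q : Fin (M+1)) :
    (Hterm U t).mulVec v (i, q)
      = (if q = t.succ then (1/2:ℂ) * (sl v t.succ i - (U t).mulVec (sl v t.castSucc) i) else 0)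
      + (if q = t.castSucc then
          (1/2:ℂ) * (sl v t.castSucc i - (U t)ᴴ.mulVec (sl v t.succ) i) else 0) := by
  have h1 : Matrix.mulVec (1 : Matrix (Fin d) (Fin d) ℂ) (sl v t.succ) i = sl v t.succ i := by
    rw [Matrix.one_mulVec]
  have h2 : Matrix.mulVec (1 : Matrix (Fin d) (Fin d) ℂ) (sl v t.castSucc) i
      = sl v t.castSucc i := by rw [Matrix.one_mulVec]
  simp only [Hterm, Matrix.kronecker_add, Matrix.add_mulVec, Matrix.smul_mulVec,
    Pi.add_apply, Pi.smul_apply, kron_std_mulVec, smul_eq_mul, h1, h2, mul_ite, mul_zero]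
  split_ifs with h h' h'
  · exact absurd (h.symm.trans h') (succ_ne_castSucc t)
  all_goals ring

lemma sum_mulVec' {n : ℕ} (A : Fin n → Matrix (Fin d × Fin (M+1)) (Fin d × Fin (M+1)) ℂ)
    (v : Fin d × Fin (M+1) → ℂ) :
    (∑ t, A t).mulVec v = ∑ t, (A t).mulVec v := by
  ext j
  simp [Matrix.mulVec, dotProduct, Matrix.sum_apply, Finset.sum_apply, Finset.sum_mul]
  exact Finset.sum_comm

lemma unitary_dot (A : Matrix (Fin d) (Fin d) ℂ) (hA : Aᴴ * A = 1) (x y : Fin d → ℂ) :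
    star (A.mulVec x) ⬝ᵥ A.mulVec y = star x ⬝ᵥ y := by
  rw [Matrix.star_mulVec, ← dotProduct_mulVec, Matrix.mulVec_mulVec, hA,
    Matrix.one_mulVec]

lemma unitary_dot' (A : Matrix (Fin d) (Fin d) ℂ) (x y : Fin d → ℂ) :
    star (A.mulVec x) ⬝ᵥ y = star x ⬝ᵥ Aᴴ.mulVec y := by
  rw [Matrix.star_mulVec, ← dotProduct_mulVec]

lemma Hterm_qform (U : Fin M → Matrix (Fin d) (Fin d) ℂ) (t : Fin M)
    (hA : (U t)ᴴ * (U t) = 1) (v : Fin d × Fin (M+1) → ℂ) :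
    star v ⬝ᵥ (Hterm U t).mulVec v
      = (1/2 : ℂ) * (star (sl v t.succ - (U t).mulVec (sl v t.castSucc)) ⬝ᵥ
          (sl v t.succ - (U t).mulVec (sl v t.castSucc))) := by
  have key : star (sl v t.succ - (U t).mulVec (sl v t.castSucc)) ⬝ᵥ
      (sl v t.succ - (U t).mulVec (sl v t.castSucc))
      = star (sl v t.succ) ⬝ᵥ sl v t.succ + star (sl v t.castSucc) ⬝ᵥ sl v t.castSucc
        - star (sl v t.succ) ⬝ᵥ (U t).mulVec (sl v t.castSucc)
        - star (sl v t.castSucc) ⬝ᵥ (U t)ᴴ.mulVec (sl v t.succ) := by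
    rw [star_sub, sub_dotProduct, dotProduct_sub, dotProduct_sub,
      unitary_dot (U t) hA, unitary_dot' (U t)]
    ring
  rw [key]
  simp only [Hterm, Matrix.kronecker_add, Matrix.add_mulVec, Matrix.smul_mulVec,
    dotProduct_add, dotProduct_smul, kron_std_qform, smul_eq_mul,
    Matrix.one_mulVec]
  ring

lemma gateProd_succ (U : Fin M → Matrix (Fin d) (Fin d) ℂ) (k : ℕ) (hk : k < M) :
    gateProd U (k+1) = U ⟨k, hk⟩ * gateProd U k := by
  simp [gateProd, hk]

lemma slices_eq (U : Fin M → Matrix (Fin d) (Fin d) ℂ) (v : Fin d × Fin (M+1) → ℂ)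
    (h : ∀ t : Fin M, sl v t.succ = (U t).mulVec (sl v t.castSucc)) :
    ∀ n (hn : n < M+1), sl v ⟨n, hn⟩ = (gateProd U n).mulVec (sl v ⟨0, M.succ_pos⟩) := by
  intro n
  induction n with
  | zero => intro hn; simp [gateProd, Matrix.one_mulVec]
  | succ k ih =>
    intro hn
    have hk : k < M := Nat.lt_of_succ_lt_succ hn
    have e1 : (⟨k+1, hn⟩ : Fin (M+1)) = (⟨k, hk⟩ : Fin M).succ := rfl
    have e2 : ((⟨k, hk⟩ : Fin M).castSucc) = (⟨k, Nat.lt_of_succ_lt hn⟩ : Fin (M+1)) := rfl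
    rw [e1, h ⟨k, hk⟩, e2, ih (Nat.lt_of_succ_lt hn), gateProd_succ U k hk,
      ← Matrix.mulVec_mulVec]

lemma dot_sum {n : ℕ} (u : Fin d × Fin (M+1) → ℂ) (f : Fin n → Fin d × Fin (M+1) → ℂ) :
    u ⬝ᵥ (∑ t, f t) = ∑ t, u ⬝ᵥ f t := by
  simp only [dotProduct, Finset.sum_apply, Finset.mul_sum]
  exact Finset.sum_comm

lemma herm_sum {n : ℕ} (f : Fin n → Matrix (Fin d × Fin (M+1)) (Fin d × Fin (M+1)) ℂ)
    (h : ∀ t, (f t).IsHermitian) : (∑ t, f t).IsHermitian := by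
  unfold Matrix.IsHermitian
  rw [Matrix.conjTranspose_sum]
  exact Finset.sum_congr rfl fun t _ => h t

lemma half_nonneg : (0:ℂ) ≤ (1/2 : ℂ) := by
  rw [Complex.le_def]
  norm_num

/-- `H_prop` is positive semidefinite and its kernel is exactly the set of
history states `(M+1)^{-1/2} ∑_{t=0}^{M} (U_t ⋯ U_1 φ) ⊗ e_t`, `φ ∈ ℂ^d`. -/
theorem Hprop_posSemidef_and_kernel
    (d M : ℕ) (hd : 0 < d)
    (U : Fin M → Matrix (Fin d) (Fin d) ℂ)
    (hU : ∀ t, U t ∈ Matrix.unitaryGroup (Fin d) ℂ) :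
    (Hprop U).PosSemidef ∧
    {v : Fin d × Fin (M + 1) → ℂ | (Hprop U).mulVec v = 0}
      = {v : Fin d × Fin (M + 1) → ℂ | ∃ φ : Fin d → ℂ,
          v = fun p => (Real.sqrt (M + 1) : ℂ)⁻¹ * (gateProd U (p.2 : ℕ)).mulVec φ p.1} := by
  have hUU : ∀ t, (U t)ᴴ * U t = 1 := by
    intro t
    have := (Matrix.mem_unitaryGroup_iff').mp (hU t)
    rwa [Matrix.star_eq_conjTranspose] at this
  -- quadratic form
  have qform : ∀ v : Fin d × Fin (M+1) → ℂ, star v ⬝ᵥ (Hprop U).mulVec v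
      = ∑ t : Fin M, (1/2 : ℂ) * (star (sl v t.succ - (U t).mulVec (sl v t.castSucc)) ⬝ᵥ
          (sl v t.succ - (U t).mulVec (sl v t.castSucc))) := by
    intro v
    rw [Hprop_eq, sum_mulVec', dot_sum]
    exact Finset.sum_congr rfl fun t _ => Hterm_qform U t (hUU t) v
  have herm : (Hprop U).IsHermitian := by
    rw [Hprop_eq]
    exact herm_sum _ fun t => Hterm_isHermitian U t
  have psd : (Hprop U).PosSemidef := by
    refine Matrix.PosSemidef.of_dotProduct_mulVec_nonneg herm fun v => ?_
    rw [qform v]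
    exact Finset.sum_nonneg fun t _ =>
      mul_nonneg half_nonneg (dotProduct_star_self_nonneg _)
  refine ⟨psd, ?_⟩
  have hc : ((Real.sqrt (M + 1) : ℝ) : ℂ) ≠ 0 := by
    simp only [ne_eq, Complex.ofReal_eq_zero]
    positivity
  ext v
  simp only [Set.mem_setOf_eq]
  constructor
  · intro hv
    have h0 : star v ⬝ᵥ (Hprop U).mulVec v = 0 := by rw [hv]; simp
    rw [qform v] at h0
    have hzero : ∀ t : Fin M,
        sl v t.succ - (U t).mulVec (sl v t.castSucc) = 0 := by
      intro t
      have := (Finset.sum_eq_zero_iff_of_nonneg (fun t _ =>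
        mul_nonneg half_nonneg (dotProduct_star_self_nonneg _))).mp h0 t (by simp)
      have h2 : star (sl v t.succ - (U t).mulVec (sl v t.castSucc)) ⬝ᵥ
          (sl v t.succ - (U t).mulVec (sl v t.castSucc)) = 0 :=
        (mul_eq_zero.mp this).resolve_left (by norm_num)
      exact dotProduct_star_self_eq_zero.mp h2
    have hstep : ∀ t : Fin M, sl v t.succ = (U t).mulVec (sl v t.castSucc) := by
      intro t
      have := hzero t
      rwa [sub_eq_zero] at this
    refine ⟨((Real.sqrt (M + 1) : ℝ) : ℂ) • sl v ⟨0, M.succ_pos⟩, ?_⟩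
    funext p
    obtain ⟨i, q⟩ := p
    have : v (i, q) = sl v ⟨(q : ℕ), q.isLt⟩ i := by rfl
    rw [this, slices_eq U v hstep (q : ℕ) q.isLt, Matrix.mulVec_smul]
    simp only [Pi.smul_apply, smul_eq_mul]
    rw [← mul_assoc, inv_mul_cancel₀ hc, one_mul]
  · rintro ⟨φ, rfl⟩
    set c : ℂ := ((Real.sqrt (M + 1) : ℝ) : ℂ)⁻¹ with hcdef
    set w : Fin d × Fin (M+1) → ℂ :=
      fun p => c * (gateProd U (p.2 : ℕ)).mulVec φ p.1 with hw
    have hsl : ∀ q : Fin (M+1), sl w q = c • (gateProd U (q : ℕ)).mulVec φ := by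
      intro q; funext i; rfl
    have hstep : ∀ t : Fin M, (U t).mulVec (sl w t.castSucc) = sl w t.succ := by
      intro t
      rw [hsl, hsl, Fin.val_succ, Fin.coe_castSucc, gateProd_succ U t t.isLt, Fin.eta,
        ← Matrix.mulVec_mulVec, Matrix.mulVec_smul]
    have hstep' : ∀ t : Fin M, (U t)ᴴ.mulVec (sl w t.succ) = sl w t.castSucc := by
      intro t
      rw [← hstep t, Matrix.mulVec_mulVec, hUU t, Matrix.one_mulVec]
    funext p
    obtain ⟨i, q⟩ := p
    rw [Hprop_eq, sum_mulVec']
    simp only [Finset.sum_apply, Pi.zero_apply, Hterm_mulVec]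
    refine Finset.sum_eq_zero fun t _ => ?_
    rw [hstep t, hstep' t]
    simp
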